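/- Per-user conditional mutual information inequality for the binary OR multiple access channel: let t ≥ 2, p ∈ (0,1), and let W be nondegenerate (W(·|0) ≠ W(·|1)). Then for every s with 1 ≤ s < t, I(X_1,…,X_s ; Y | X_{s+1},…,X_t) / s > I(X_1,…,X_t ; Y) / t. -/

import Mathlib

open Finset
open scoped Classical

noncomputable section

/-- The Bernoulli probability mass function on `Bool` with parameter `p`. -/
def bern (p : ℝ) (b : Bool) : ℝ := if b then p else 1 - p

/-- The binary OR of a finite family of bits. -/
def orB {t : ℕ} (x : Fin t → Bool) : Bool := decide (∃ i, x i = true)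

/-- Mutual information (natural logarithm) of a joint pmf on a product of two finite sets. -/
def MI {A B : Type} [Fintype A] [Fintype B] (μ : A → B → ℝ) : ℝ :=
  ∑ a : A, ∑ b : B,
    μ a b * Real.log (μ a b / ((∑ b' : B, μ a b') * (∑ a' : A, μ a' b)))

/-- Conditional mutual information `I(A;B|C)` (natural logarithm) of a joint pmf on a
product of three finite sets, conditioning on the third coordinate. -/
def CMI {A B C : Type} [Fintype A] [Fintype B] [Fintype C] (μ : A → B → C → ℝ) : ℝ :=
  ∑ a : A, ∑ b : B, ∑ c : C,
    μ a b c * Real.log ((μ a b c * (∑ a' : A, ∑ b' : B, μ a' b' c)) /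
      ((∑ b' : B, μ a b' c) * (∑ a' : A, μ a' b c)))

/-- Joint pmf of `((X_1,…,X_s), Y, (X_{s+1},…,X_{s+r}))` for the `(s+r)`-user binary OR
multiple access channel at parameter `p` with channel `W`: all inputs are i.i.d.
Bernoulli(`p`), and `Y ∼ W(·|Z)` where `Z` is the binary OR of all `s+r` inputs. -/
def macAYC {Y : Type} [Fintype Y] (W : Y → Bool → ℝ) (p : ℝ) (s r : ℕ)
    (a : Fin s → Bool) (y : Y) (c : Fin r → Bool) : ℝ :=
  (∏ i, bern p (a i)) * (∏ j, bern p (c j)) * W y (orB a || orB c)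

/-- Joint pmf of `((X_1,…,X_{s+r}), Y)` for the same channel, the input block written as a
pair `((X_1,…,X_s), (X_{s+1},…,X_{s+r}))`. -/
def macFull {Y : Type} [Fintype Y] (W : Y → Bool → ℝ) (p : ℝ) (s r : ℕ)
    (x : (Fin s → Bool) × (Fin r → Bool)) (y : Y) : ℝ :=
  (∏ i, bern p (x.1 i)) * (∏ j, bern p (x.2 j)) * W y (orB x.1 || orB x.2)

/-- per-user conditional mutual information inequality for the binary OR
multiple access channel.  For `t = s + r ≥ 2` users (`1 ≤ s < t`), `p ∈ (0,1)` and a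
nondegenerate channel `W`,
`I(X_1,…,X_s ; Y | X_{s+1},…,X_t)/s > I(X_1,…,X_t ; Y)/t`. -/

lemma orB_eq_false_iff {n : ℕ} (x : Fin n → Bool) :
    orB x = false ↔ x = fun _ => false := by
  simp [orB, funext_iff]

lemma sum_bern_one (p : ℝ) (n : ℕ) :
    ∑ x : Fin n → Bool, (∏ i, bern p (x i)) = 1 := by
  rw [← Fintype.piFinset_univ, ← Finset.prod_univ_sum]
  have : bern p true + bern p false = 1 := by simp [bern]
  simp [this]

lemma sum_or (p : ℝ) (n : ℕ) (h : Bool → ℝ) :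
    ∑ x : Fin n → Bool, (∏ i, bern p (x i)) * h (orB x)
      = (1-p)^n * h false + (1 - (1-p)^n) * h true := by
  classical
  have hP0 : (∏ i : Fin n, bern p ((fun _ => false) i)) = (1-p)^n := by
    simp [bern]
  have step : ∀ x : Fin n → Bool,
      (∏ i, bern p (x i)) * h (orB x)
        = (∏ i, bern p (x i)) * h true
          + (if x = (fun _ => false) then (∏ i, bern p (x i)) * (h false - h true) else 0) := by
    intro x
    by_cases hx : x = fun _ => false
    · have : orB x = false := (orB_eq_false_iff x).mpr hx
      rw [this, if_pos hx]
      ring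
    · have : orB x = true := by
        rcases Bool.eq_false_or_eq_true (orB x) with h' | h'
        · exact h'
        · exact absurd ((orB_eq_false_iff x).mp h') hx
      rw [this, if_neg hx]
      ring
  rw [Finset.sum_congr rfl (fun x _ => step x), Finset.sum_add_distrib]
  rw [Finset.sum_ite_eq' Finset.univ (fun _ => false) (fun x => (∏ i, bern p (x i)) * (h false - h true))]
  rw [← Finset.sum_mul, sum_bern_one]
  simp [hP0]
  ring

lemma sum_or2 (p : ℝ) (s r : ℕ) (h : Bool → ℝ) :
    ∑ x : (Fin s → Bool) × (Fin r → Bool),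
        (∏ i, bern p (x.1 i)) * (∏ j, bern p (x.2 j)) * h (orB x.1 || orB x.2)
      = (1-p)^(s+r) * h false + (1 - (1-p)^(s+r)) * h true := by
  rw [Fintype.sum_prod_type]
  have inner : ∀ α : Fin s → Bool,
      ∑ β : Fin r → Bool, (∏ i, bern p (α i)) * (∏ j, bern p (β j)) * h (orB α || orB β)
        = (∏ i, bern p (α i)) *
            ((1-p)^r * h (orB α) + (1 - (1-p)^r) * h true) := by
    intro α
    have := sum_or p r (fun z => h (orB α || z))
    calc ∑ β : Fin r → Bool, (∏ i, bern p (α i)) * (∏ j, bern p (β j)) * h (orB α || orB β)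
        = (∏ i, bern p (α i)) * ∑ β : Fin r → Bool,
            (∏ j, bern p (β j)) * h (orB α || orB β) := by
          rw [Finset.mul_sum]; apply Finset.sum_congr rfl; intro β _; ring
      _ = (∏ i, bern p (α i)) * ((1-p)^r * h (orB α || false) + (1 - (1-p)^r) * h (orB α || true)) := by
          rw [this]
      _ = (∏ i, bern p (α i)) * ((1-p)^r * h (orB α) + (1 - (1-p)^r) * h true) := by
          simp
  rw [Finset.sum_congr rfl (fun α _ => inner α)]
  rw [sum_or p s (fun z => (1-p)^r * h z + (1 - (1-p)^r) * h true)]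
  rw [pow_add]
  ring


/-- per-letter mutual information contribution. -/
def Kf (a b u : ℝ) : ℝ :=
  u * a * Real.log (a / (u * a + (1 - u) * b))
    + (1 - u) * b * Real.log (b / (u * a + (1 - u) * b))

/-- auxiliary function `g(x) = eˣ · Kf a b (e⁻ˣ)`. -/
def gf (a b x : ℝ) : ℝ :=
  a * Real.log a + (Real.exp x - 1) * (b * Real.log b)
    - Real.exp x * ((b + Real.exp (-x) * (a - b)) * Real.log (b + Real.exp (-x) * (a - b)))

lemma gf_zero (a b : ℝ) : gf a b 0 = 0 := by
  simp [gf]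

lemma hasDerivAt_m (a b x : ℝ) :
    HasDerivAt (fun x => b + Real.exp (-x) * (a - b)) (-(Real.exp (-x)) * (a - b)) x := by
  have h1 : HasDerivAt (fun x : ℝ => Real.exp (-x)) (-(Real.exp (-x))) x := by
    simpa [Function.comp_def] using (Real.hasDerivAt_exp (-x)).comp x (hasDerivAt_neg x)
  simpa using (h1.mul_const (a - b)).const_add b

lemma gf_deriv (a b : ℝ) (hb : 0 < b) (ha : 0 ≤ a) {x : ℝ} (hx : 0 < x) :
    HasDerivAt (gf a b)
      (Real.exp x * (b * Real.log b - b * Real.log (b + Real.exp (-x) * (a - b))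
        + (b + Real.exp (-x) * (a - b)) - b)) x := by
  set m : ℝ → ℝ := fun x => b + Real.exp (-x) * (a - b) with hm
  have hmx : 0 < m x := by
    have he : Real.exp (-x) < 1 := Real.exp_lt_one_iff.mpr (by linarith)
    have he0 : 0 < Real.exp (-x) := Real.exp_pos _
    have : m x = Real.exp (-x) * a + (1 - Real.exp (-x)) * b := by simp [hm]; ring
    nlinarith
  have hmd := hasDerivAt_m a b x
  have hφ : HasDerivAt (fun x => m x * Real.log (m x))
      ((Real.log (m x) + 1) * (-(Real.exp (-x)) * (a - b))) x :=
    (Real.hasDerivAt_mul_log hmx.ne').comp x hmd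
  have hg : HasDerivAt (gf a b)
      ((Real.exp x * (b * Real.log b))
        - (Real.exp x * (m x * Real.log (m x))
            + Real.exp x * ((Real.log (m x) + 1) * (-(Real.exp (-x)) * (a - b))))) x := by
    have h1 : HasDerivAt (fun x : ℝ => a * Real.log a + (Real.exp x - 1) * (b * Real.log b))
        (Real.exp x * (b * Real.log b)) x := by
      simpa using (((Real.hasDerivAt_exp x).sub_const 1).mul_const (b * Real.log b)).const_add
        (a * Real.log a)
    exact h1.sub ((Real.hasDerivAt_exp x).mul hφ)
  convert hg using 1
  simp only [hm]
  ring

/-- first derivative of gf -/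
def gf1 (a b x : ℝ) : ℝ :=
  Real.exp x * (b * Real.log b - b * Real.log (b + Real.exp (-x) * (a - b))
    + (b + Real.exp (-x) * (a - b)) - b)

lemma gf_strictConcave (a b : ℝ) (ha : 0 ≤ a) (hb : 0 < b) (hab : a ≠ b) :
    StrictConcaveOn ℝ (Set.Ici (0 : ℝ)) (gf a b) := by
  have hmpos : ∀ x : ℝ, 0 < x → 0 < b + Real.exp (-x) * (a - b) := by
    intro x hx
    have he : Real.exp (-x) < 1 := Real.exp_lt_one_iff.mpr (by linarith)
    have he0 : 0 < Real.exp (-x) := Real.exp_pos _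
    nlinarith
  apply strictConcaveOn_of_deriv2_neg (convex_Ici 0)
  · -- continuity
    have : Continuous (gf a b) := by
      have h1 : Continuous (fun x : ℝ => b + Real.exp (-x) * (a - b)) := by
        continuity
      have h2 : Continuous (fun x : ℝ =>
          (b + Real.exp (-x) * (a - b)) * Real.log (b + Real.exp (-x) * (a - b))) :=
        Real.continuous_mul_log.comp h1
      unfold gf
      continuity
    exact this.continuousOn
  · intro x hx
    rw [interior_Ici] at hx
    have hx : 0 < x := hx
    -- deriv gf = gf1 on Ioi 0
    have hEq : Set.EqOn (deriv (gf a b)) (gf1 a b) (Set.Ioi 0) := by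
      intro y hy
      exact (gf_deriv a b hb ha hy).deriv
    have hEq' : deriv (gf a b) =ᶠ[nhds x] gf1 a b :=
      Filter.eventuallyEq_of_mem (isOpen_Ioi.mem_nhds hx) hEq
    have h2 : deriv^[2] (gf a b) x = deriv (gf1 a b) x := by
      simp only [Function.iterate_succ, Function.iterate_zero, Function.comp_apply, id]
      exact hEq'.deriv_eq
    rw [h2]
    -- compute deriv gf1 x
    set m : ℝ → ℝ := fun x => b + Real.exp (-x) * (a - b) with hm
    have hmx : 0 < m x := hmpos x hx
    have hmd := hasDerivAt_m a b x
    have hlog : HasDerivAt (fun y => Real.log (m y))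
        ((m x)⁻¹ * (-(Real.exp (-x)) * (a - b))) x :=
      (Real.hasDerivAt_log hmx.ne').comp x hmd
    have hinner : HasDerivAt (fun y => b * Real.log b - b * Real.log (m y) + m y - b)
        (-(b * ((m x)⁻¹ * (-(Real.exp (-x)) * (a - b)))) + (-(Real.exp (-x)) * (a - b))) x := by
      exact (((hlog.const_mul b).const_sub (b * Real.log b)).add hmd).sub_const b
    have hG : HasDerivAt (gf1 a b)
        (Real.exp x * (b * Real.log b - b * Real.log (m x) + m x - b)
          + Real.exp x *
            (-(b * ((m x)⁻¹ * (-(Real.exp (-x)) * (a - b)))) + (-(Real.exp (-x)) * (a - b)))) x := by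
      exact (Real.hasDerivAt_exp x).mul hinner
    rw [hG.deriv]
    -- now show negativity
    have hbm : b / m x ≠ 1 := by
      have hne : m x ≠ b := by
        have hd : m x - b = Real.exp (-x) * (a - b) := by simp only [hm]; ring
        intro h
        rw [h, sub_self] at hd
        have hab' : a - b ≠ 0 := sub_ne_zero.mpr hab
        exact (mul_ne_zero (Real.exp_pos (-x)).ne' hab') hd.symm
      intro h
      rw [div_eq_one_iff_eq hmx.ne'] at h
      exact hne h.symm
    have hlt : Real.log (b / m x) < b / m x - 1 :=
      Real.log_lt_sub_one_of_pos (div_pos hb hmx) hbm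
    have hlogdiv : Real.log (b / m x) = Real.log b - Real.log (m x) :=
      Real.log_div hb.ne' hmx.ne'
    have hme : -(Real.exp (-x)) * (a - b) = b - m x := by simp only [hm]; ring
    rw [hme]
    have hE : 0 < Real.exp x := Real.exp_pos x
    -- goal: exp x * (...) + exp x * (...) < 0
    have key : b * Real.log b - b * Real.log (m x) < b * (b / m x - 1) := by
      have := mul_lt_mul_of_pos_left hlt hb
      rw [hlogdiv] at this
      linarith [this]
    have hfield : b * (b / m x - 1) + (m x - b) + (-(b * ((b - m x) / m x)) + (b - m x))
        = 0 := by
      field_simp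
      ring
    have hinv : (m x)⁻¹ * (b - m x) = (b - m x) / m x := (div_eq_inv_mul _ _).symm
    rw [hinv]
    have hsum : (b * Real.log b - b * Real.log (m x) + m x - b)
        + (-(b * ((b - m x) / m x)) + (b - m x)) < 0 := by linarith
    calc Real.exp x * (b * Real.log b - b * Real.log (m x) + m x - b)
          + Real.exp x * (-(b * ((b - m x) / m x)) + (b - m x))
        = Real.exp x * ((b * Real.log b - b * Real.log (m x) + m x - b)
            + (-(b * ((b - m x) / m x)) + (b - m x))) := by ring
      _ < 0 := mul_neg_of_pos_of_neg hE hsum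

lemma gf_slope (a b : ℝ) (ha : 0 ≤ a) (hb : 0 < b) (hab : a ≠ b)
    {x y : ℝ} (hx : 0 < x) (hxy : x < y) :
    x * gf a b y < y * gf a b x := by
  have hconc := gf_strictConcave a b ha hb hab
  have hy : 0 < y := hx.trans hxy
  have h0 : (0:ℝ) ∈ Set.Ici (0:ℝ) := Set.mem_Ici.mpr le_rfl
  have hymem : y ∈ Set.Ici (0:ℝ) := hy.le
  have hcoef1 : 0 < 1 - x / y := by
    have : x / y < 1 := (div_lt_one hy).mpr hxy
    linarith
  have hcoef2 : 0 < x / y := div_pos hx hy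
  have := hconc.2 h0 hymem (by exact fun h => hy.ne' h.symm)
    hcoef1 hcoef2 (by ring)
  have hpt : (1 - x / y) • (0:ℝ) + (x / y) • y = x := by
    rw [smul_eq_mul, smul_eq_mul, mul_zero, zero_add, div_mul_cancel₀ x hy.ne']
  rw [hpt, gf_zero] at this
  simp only [smul_eq_mul, mul_zero, zero_add] at this
  -- this : x / y * gf a b y < gf a b x
  rw [div_mul_eq_mul_div, div_lt_iff₀ hy] at this
  linarith

lemma Kf_eq_gf (a b : ℝ) (ha : 0 ≤ a) (hb : 0 < b) {w : ℝ} (hw : 0 < w) (hw1 : w < 1) :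
    Kf a b w = w * gf a b (-Real.log w) := by
  have hmw : 0 < w * a + (1 - w) * b := by nlinarith
  have hexp : Real.exp (-(-Real.log w)) = w := by
    rw [neg_neg, Real.exp_log hw]
  have hexp2 : Real.exp (-Real.log w) = w⁻¹ := by
    rw [Real.exp_neg, Real.exp_log hw]
  have hmeq : b + Real.exp (-(-Real.log w)) * (a - b) = w * a + (1 - w) * b := by
    rw [hexp]; ring
  rw [Kf, gf, hexp2, hmeq]
  have hbm : Real.log (b / (w * a + (1 - w) * b))
      = Real.log b - Real.log (w * a + (1 - w) * b) := Real.log_div hb.ne' hmw.ne'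
  have hw0 : w ≠ 0 := hw.ne'
  rcases eq_or_lt_of_le ha with h0 | hapos
  · -- a = 0
    rw [← h0]
    have hmb : (0:ℝ) < (1 - w) * b := by nlinarith
    have hbm' : Real.log (b / (w * 0 + (1 - w) * b))
        = Real.log b - Real.log (w * 0 + (1 - w) * b) := by
      rw [show w * 0 + (1 - w) * b = (1 - w) * b by ring]
      exact Real.log_div hb.ne' hmb.ne'
    rw [hbm']
    simp only [mul_zero, zero_mul, zero_add]
    field_simp
  · have ham : Real.log (a / (w * a + (1 - w) * b))
        = Real.log a - Real.log (w * a + (1 - w) * b) := Real.log_div hapos.ne' hmw.ne'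
    rw [hbm, ham]
    field_simp
    ring

lemma Kf_self (a w : ℝ) : Kf a a w = 0 := by
  rcases eq_or_ne a 0 with h | h
  · simp [Kf, h]
  · have : w * a + (1 - w) * a = a := by ring
    simp [Kf, this, div_self h]

lemma Kf_zero_right (a w : ℝ) (hw : 0 < w) : Kf a 0 w = w * a * (-Real.log w) := by
  rcases eq_or_ne a 0 with h | h
  · simp [Kf, h]
  · have h1 : a / (w * a + (1 - w) * 0) = w⁻¹ := by
      rw [mul_zero, add_zero]
      rw [div_eq_iff (by positivity : w * a ≠ 0)]
      field_simp
    have h2 : a / (w * a) = w⁻¹ := by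
      rw [div_eq_iff (by positivity : w * a ≠ 0)]
      field_simp
    simp [Kf, h1, h2, Real.log_inv]

lemma perY_lt (a b : ℝ) (ha : 0 ≤ a) (hb : 0 < b) (hab : a ≠ b)
    {u v : ℝ} (hv : 0 < v) (hvu : v < u) (hu : u < 1) :
    Kf a b v * (u * (-Real.log u)) < Kf a b u * (v * (-Real.log v)) := by
  have hu0 : 0 < u := hv.trans hvu
  have hv1 : v < 1 := hvu.trans hu
  set x := -Real.log u with hx
  set y := -Real.log v with hy
  have hxpos : 0 < x := by
    rw [hx, neg_pos]
    exact Real.log_neg hu0 hu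
  have hxy : x < y := by
    rw [hx, hy, neg_lt_neg_iff]
    exact Real.log_lt_log hv hvu
  rw [Kf_eq_gf a b ha hb hv hv1, Kf_eq_gf a b ha hb hu0 hu]
  have hslope := gf_slope a b ha hb hab hxpos hxy
  calc v * gf a b y * (u * x) = (u * v) * (x * gf a b y) := by ring
    _ < (u * v) * (y * gf a b x) := by
        apply mul_lt_mul_of_pos_left hslope (by positivity)
    _ = u * gf a b x * (v * y) := by ring

lemma perY_le (a b : ℝ) (ha : 0 ≤ a) (hb : 0 ≤ b)
    {u v : ℝ} (hv : 0 < v) (hvu : v < u) (hu : u < 1) :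
    Kf a b v * (u * (-Real.log u)) ≤ Kf a b u * (v * (-Real.log v)) := by
  rcases eq_or_ne a b with h | hab
  · rw [h, Kf_self, Kf_self]
    simp
  rcases eq_or_lt_of_le hb with h0 | hbpos
  · rw [← h0, Kf_zero_right a v hv, Kf_zero_right a u (hv.trans hvu)]
    ring_nf
    exact le_refl _
  · exact (perY_lt a b ha hbpos hab hv hvu hu).le


lemma bern_pos {p : ℝ} (hp : p ∈ Set.Ioo (0:ℝ) 1) (b : Bool) : 0 < bern p b := by
  obtain ⟨h1, h2⟩ := hp
  cases b <;> simp [bern] <;> linarith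

lemma prod_bern_pos {p : ℝ} (hp : p ∈ Set.Ioo (0:ℝ) 1) {n : ℕ} (x : Fin n → Bool) :
    0 < ∏ i, bern p (x i) :=
  Finset.prod_pos (fun i _ => bern_pos hp (x i))

lemma MI_eq {Y : Type} [Fintype Y] (W : Y → Bool → ℝ)
    (hW1 : ∀ z, ∑ y : Y, W y z = 1)
    {p : ℝ} (hp : p ∈ Set.Ioo (0:ℝ) 1) (s r : ℕ) :
    MI (macFull W p s r) = ∑ y : Y, Kf (W y false) (W y true) ((1-p)^(s+r)) := by
  classical
  set q := 1 - p with hq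
  set M : Y → ℝ := fun y => q^(s+r) * W y false + (1 - q^(s+r)) * W y true with hM
  have row : ∀ x : (Fin s → Bool) × (Fin r → Bool),
      ∑ y : Y, macFull W p s r x y = (∏ i, bern p (x.1 i)) * (∏ j, bern p (x.2 j)) := by
    intro x
    simp only [macFull]
    rw [← Finset.mul_sum, hW1, mul_one]
  have col : ∀ y : Y,
      ∑ x : (Fin s → Bool) × (Fin r → Bool), macFull W p s r x y = M y := by
    intro y
    simp only [macFull]
    exact sum_or2 p s r (fun z => W y z)
  have point : ∀ (x : (Fin s → Bool) × (Fin r → Bool)) (y : Y),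
      macFull W p s r x y * Real.log (macFull W p s r x y /
          ((∑ y' : Y, macFull W p s r x y') *
            (∑ x' : (Fin s → Bool) × (Fin r → Bool), macFull W p s r x' y)))
        = (∏ i, bern p (x.1 i)) * (∏ j, bern p (x.2 j)) *
            (W y (orB x.1 || orB x.2) * Real.log (W y (orB x.1 || orB x.2) / M y)) := by
    intro x y
    rw [row x, col y]
    set P := (∏ i, bern p (x.1 i)) * (∏ j, bern p (x.2 j)) with hP
    have hPpos : 0 < P := mul_pos (prod_bern_pos hp x.1) (prod_bern_pos hp x.2)
    have hdiv : macFull W p s r x y / (P * M y)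
        = W y (orB x.1 || orB x.2) / M y := by
      show P * W y (orB x.1 || orB x.2) / (P * M y) = _
      exact mul_div_mul_left _ _ hPpos.ne'
    rw [hdiv]
    show P * W y (orB x.1 || orB x.2) * _ = _
    ring
  unfold MI
  rw [Finset.sum_congr rfl (fun x _ => Finset.sum_congr rfl (fun y _ => point x y))]
  have swap : ∀ x : (Fin s → Bool) × (Fin r → Bool),
      ∑ y : Y, (∏ i, bern p (x.1 i)) * (∏ j, bern p (x.2 j)) *
          (W y (orB x.1 || orB x.2) * Real.log (W y (orB x.1 || orB x.2) / M y))
        = (∏ i, bern p (x.1 i)) * (∏ j, bern p (x.2 j)) *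
            (∑ y : Y, W y (orB x.1 || orB x.2) * Real.log (W y (orB x.1 || orB x.2) / M y)) := by
    intro x
    rw [Finset.mul_sum]
  rw [Finset.sum_congr rfl (fun x _ => swap x)]
  rw [sum_or2 p s r
    (fun z => ∑ y : Y, W y z * Real.log (W y z / M y))]
  rw [Finset.mul_sum, Finset.mul_sum, ← Finset.sum_add_distrib]
  apply Finset.sum_congr rfl
  intro y _
  simp only [Kf, hM]
  ring

lemma CMI_eq {Y : Type} [Fintype Y] (W : Y → Bool → ℝ)
    (hW1 : ∀ z, ∑ y : Y, W y z = 1)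
    {p : ℝ} (hp : p ∈ Set.Ioo (0:ℝ) 1) (s r : ℕ) :
    CMI (macAYC W p s r) = (1-p)^r * ∑ y : Y, Kf (W y false) (W y true) ((1-p)^s) := by
  classical
  set Dz : Y → Bool → ℝ := fun y z => (1-p)^s * W y z + (1 - (1-p)^s) * W y true with hDz
  have row : ∀ (a : Fin s → Bool) (c : Fin r → Bool),
      ∑ y' : Y, macAYC W p s r a y' c = (∏ i, bern p (a i)) * (∏ j, bern p (c j)) := by
    intro a c
    simp only [macAYC]
    rw [← Finset.mul_sum, hW1, mul_one]
  have tot : ∀ c : Fin r → Bool,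
      ∑ a' : Fin s → Bool, ∑ y' : Y, macAYC W p s r a' y' c = ∏ j, bern p (c j) := by
    intro c
    rw [Finset.sum_congr rfl (fun a' _ => row a' c)]
    rw [← Finset.sum_mul, sum_bern_one, one_mul]
  have col : ∀ (y : Y) (c : Fin r → Bool),
      ∑ a' : Fin s → Bool, macAYC W p s r a' y c = (∏ j, bern p (c j)) * Dz y (orB c) := by
    intro y c
    have step : ∀ a' : Fin s → Bool, macAYC W p s r a' y c
        = (∏ j, bern p (c j)) * ((∏ i, bern p (a' i)) * W y (orB a' || orB c)) := by
      intro a'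
      simp only [macAYC]; ring
    rw [Finset.sum_congr rfl (fun a' _ => step a'), ← Finset.mul_sum]
    have := sum_or p s (fun z => W y (z || orB c))
    rw [show (∑ a' : Fin s → Bool, (∏ i, bern p (a' i)) * W y (orB a' || orB c))
        = ∑ x : Fin s → Bool, (∏ i, bern p (x i)) * (fun z => W y (z || orB c)) (orB x)
        from rfl, sum_or p s (fun z => W y (z || orB c))]
    simp only [Bool.false_or, Bool.true_or, hDz]
  have point : ∀ (a : Fin s → Bool) (y : Y) (c : Fin r → Bool),
      macAYC W p s r a y c * Real.log ((macAYC W p s r a y c *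
          (∑ a' : Fin s → Bool, ∑ y' : Y, macAYC W p s r a' y' c)) /
        ((∑ y' : Y, macAYC W p s r a y' c) * (∑ a' : Fin s → Bool, macAYC W p s r a' y c)))
        = (∏ j, bern p (c j)) * ((∏ i, bern p (a i)) *
            (W y (orB a || orB c) * Real.log (W y (orB a || orB c) / Dz y (orB c)))) := by
    intro a y c
    rw [row a c, tot c, col y c]
    set P1 := ∏ i, bern p (a i) with hP1
    set P2 := ∏ j, bern p (c j) with hP2
    have h1 : 0 < P1 := prod_bern_pos hp a
    have h2 : 0 < P2 := prod_bern_pos hp c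
    have hdiv : (macAYC W p s r a y c * P2) / ((P1 * P2) * (P2 * Dz y (orB c)))
        = W y (orB a || orB c) / Dz y (orB c) := by
      show (P1 * P2 * W y (orB a || orB c) * P2) / _ = _
      rw [show P1 * P2 * W y (orB a || orB c) * P2
          = (P1 * P2 * P2) * W y (orB a || orB c) by ring,
        show (P1 * P2) * (P2 * Dz y (orB c)) = (P1 * P2 * P2) * Dz y (orB c) by ring]
      exact mul_div_mul_left _ _ (by positivity)
    rw [hdiv]
    show P1 * P2 * W y (orB a || orB c) * _ = _
    ring
  unfold CMI
  rw [Finset.sum_congr rfl (fun a _ => Finset.sum_congr rfl (fun y _ =>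
    Finset.sum_congr rfl (fun c _ => point a y c)))]
  -- inner sum over c
  have innerC : ∀ (a : Fin s → Bool) (y : Y),
      ∑ c : Fin r → Bool, (∏ j, bern p (c j)) * ((∏ i, bern p (a i)) *
          (W y (orB a || orB c) * Real.log (W y (orB a || orB c) / Dz y (orB c))))
        = (1-p)^r * ((∏ i, bern p (a i)) *
            (W y (orB a) * Real.log (W y (orB a) / Dz y false))) := by
    intro a y
    have hx := sum_or p r (fun z => (∏ i, bern p (a i)) *
          (W y (orB a || z) * Real.log (W y (orB a || z) / Dz y z)))
    rw [hx]
    simp only [Bool.or_false, Bool.or_true]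
    have hzero : W y true * Real.log (W y true / Dz y true) = 0 := by
      rcases eq_or_ne (W y true) 0 with h | h
      · rw [h]; ring
      · have : Dz y true = W y true := by simp only [hDz]; ring
        rw [this, div_self h, Real.log_one, mul_zero]
    rw [hzero]
    ring
  rw [Finset.sum_congr rfl (fun a _ => Finset.sum_congr rfl (fun y _ => innerC a y))]
  -- now sum over y then a
  have swap : ∀ a : Fin s → Bool,
      ∑ y : Y, (1-p)^r * ((∏ i, bern p (a i)) *
          (W y (orB a) * Real.log (W y (orB a) / Dz y false)))
        = (1-p)^r * ((∏ i, bern p (a i)) *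
            (∑ y : Y, W y (orB a) * Real.log (W y (orB a) / Dz y false))) := by
    intro a
    rw [Finset.mul_sum, Finset.mul_sum]
  rw [Finset.sum_congr rfl (fun a _ => swap a)]
  rw [show (∑ a : Fin s → Bool, (1-p)^r * ((∏ i, bern p (a i)) *
        (∑ y : Y, W y (orB a) * Real.log (W y (orB a) / Dz y false))))
      = (1-p)^r * ∑ x : Fin s → Bool, (∏ i, bern p (x i)) *
        (∑ y : Y, W y (orB x) * Real.log (W y (orB x) / Dz y false)) by
    rw [Finset.mul_sum]]
  have hx2 := sum_or p s (fun z => ∑ y : Y, W y z * Real.log (W y z / Dz y false))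
  rw [hx2]
  congr 1
  rw [Finset.mul_sum, Finset.mul_sum, ← Finset.sum_add_distrib]
  apply Finset.sum_congr rfl
  intro y _
  simp only [Kf, hDz]
  ring

theorem statement7 (Y : Type) [Fintype Y] (W : Y → Bool → ℝ)
    (hW0 : ∀ y z, 0 ≤ W y z) (hW1 : ∀ z, ∑ y : Y, W y z = 1)
    (hWnd : ∃ y, W y false ≠ W y true)
    (p : ℝ) (hp : p ∈ Set.Ioo (0 : ℝ) 1)
    (s r : ℕ) (hs : 1 ≤ s) (hr : 1 ≤ r) :
    MI (macFull W p s r) / ((s : ℝ) + r) < CMI (macAYC W p s r) / s := by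
  classical
  obtain ⟨hp0, hp1⟩ := hp
  have hq0 : 0 < 1 - p := by linarith
  have hq1 : 1 - p < 1 := by linarith
  set u : ℝ := (1-p)^s with hu_def
  set v : ℝ := (1-p)^(s+r) with hv_def
  have hu1 : u < 1 := pow_lt_one₀ hq0.le hq1 (by omega)
  have hv0 : 0 < v := pow_pos hq0 _
  have hu0 : 0 < u := pow_pos hq0 _
  have hvu : v < u := pow_lt_pow_right_of_lt_one₀ hq0 hq1 (by omega)
  -- a good output letter
  have hgood : ∃ y : Y, W y false ≠ W y true ∧ 0 < W y true := by
    by_contra hcon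
    push_neg at hcon
    have hnn : ∀ y ∈ Finset.univ, (0:ℝ) ≤ W y false - W y true := by
      intro y _
      rcases eq_or_ne (W y false) (W y true) with h | h
      · linarith [h.le, h.ge]
      · have := hcon y h
        have h0 := hW0 y true
        have : W y true = 0 := le_antisymm this h0
        linarith [hW0 y false]
    have hsum0 : ∑ y : Y, (W y false - W y true) = 0 := by
      rw [Finset.sum_sub_distrib, hW1 false, hW1 true, sub_self]
    have hall := (Finset.sum_eq_zero_iff_of_nonneg hnn).mp hsum0
    obtain ⟨y, hy⟩ := hWnd
    have := hall y (Finset.mem_univ y)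
    exact hy (by linarith)
  obtain ⟨y0, hy0ne, hy0pos⟩ := hgood
  -- the summed strict inequality
  have hsum : (∑ y : Y, Kf (W y false) (W y true) v) * (u * (-Real.log u))
      < (∑ y : Y, Kf (W y false) (W y true) u) * (v * (-Real.log v)) := by
    rw [Finset.sum_mul, Finset.sum_mul]
    apply Finset.sum_lt_sum
    · intro y _
      exact perY_le (W y false) (W y true) (hW0 y false) (hW0 y true) hv0 hvu hu1
    · exact ⟨y0, Finset.mem_univ y0,
        perY_lt (W y0 false) (W y0 true) (hW0 y0 false) hy0pos hy0ne hv0 hvu hu1⟩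
  -- rewrite logs
  have hlampos : 0 < -Real.log (1-p) := by
    rw [neg_pos]
    exact Real.log_neg hq0 hq1
  set lam : ℝ := -Real.log (1-p) with hlam
  have hlogu : -Real.log u = (s:ℝ) * lam := by
    rw [hu_def, Real.log_pow, hlam]; push_cast; ring
  have hlogv : -Real.log v = ((s:ℝ) + r) * lam := by
    rw [hv_def, Real.log_pow, hlam]; push_cast; ring
  rw [hlogu, hlogv] at hsum
  have hMI : MI (macFull W p s r) = ∑ y : Y, Kf (W y false) (W y true) v :=
    MI_eq W hW1 ⟨hp0, hp1⟩ s r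
  have hCMI : CMI (macAYC W p s r) = (1-p)^r * ∑ y : Y, Kf (W y false) (W y true) u :=
    CMI_eq W hW1 ⟨hp0, hp1⟩ s r
  set A : ℝ := ∑ y : Y, Kf (W y false) (W y true) v with hA
  set B : ℝ := ∑ y : Y, Kf (W y false) (W y true) u with hB
  rw [hMI, hCMI]
  have hspos : (0:ℝ) < (s:ℝ) := by
    have : (1:ℝ) ≤ (s:ℝ) := by exact_mod_cast hs
    linarith
  have htpos : (0:ℝ) < (s:ℝ) + r := by
    have : (0:ℝ) ≤ (r:ℝ) := Nat.cast_nonneg r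
    linarith
  rw [div_lt_div_iff₀ htpos hspos]
  -- from hsum : A * (u * (s*lam)) < B * (v * ((s+r)*lam))
  have hcancelpos : 0 < (1-p)^s * lam := mul_pos hu0 hlampos
  have hkey : A * (s:ℝ) * ((1-p)^s * lam) < (1-p)^r * B * ((s:ℝ) + r) * ((1-p)^s * lam) := by
    calc A * (s:ℝ) * ((1-p)^s * lam) = A * (u * ((s:ℝ) * lam)) := by rw [hu_def]; ring
      _ < B * (v * (((s:ℝ) + r) * lam)) := hsum
      _ = (1-p)^r * B * ((s:ℝ) + r) * ((1-p)^s * lam) := by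
          rw [hv_def, pow_add]; ring
  exact lt_of_mul_lt_mul_right hkey hcancelpos.le
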